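/- arXiv:1802.09932 — 2 statements merged into one kernel-verified Lean document; each statement's English description precedes it below -/
import Mathlib

section
/- Let f_i : ℝ^d → ℝ be convex and L-smooth, f = (1/n)∑f_i with minimizer x*, and fix x, x̃ ∈ ℝ^d. For each i, with g_i = ∇f_i(x) − ∇f_i(x̃) + ∇f(x̃), it holds that (1/n)∑_{i=1}^n ‖g_i − ∇f(x)‖² ≤ 2L [ f(x̃) − f(x) − ⟨∇f(x), x̃ − x⟩ ]. -/
open scoped BigOperators RealInnerProductSpace
open InnerProductSpace Set

variable {F : Type*} [NormedAddCommGroup F] [InnerProductSpace ℝ F] [CompleteSpace F]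

lemma line_hasDerivAt {f : F → ℝ} (hf : Differentiable ℝ f) (a v : F) (t : ℝ) :
    HasDerivAt (fun s : ℝ => f (a + s • v)) ⟪gradient f (a + t • v), v⟫ t := by
  have h1 : HasFDerivAt f (toDual ℝ F (gradient f (a + t • v))) (a + t • v) :=
    (hf (a + t • v)).hasGradientAt
  have h2 : HasDerivAt (fun s : ℝ => a + s • v) v t := by
    simpa using ((hasDerivAt_id t).smul_const v).const_add a
  have := h1.comp_hasDerivAt t h2
  exact this

lemma convex_grad_ineq {f : F → ℝ} (hc : ConvexOn ℝ Set.univ f) (hf : Differentiable ℝ f)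
    (x y : F) : f x + ⟪gradient f x, y - x⟫ ≤ f y := by
  set v := y - x with hv
  have hconv : ConvexOn ℝ Set.univ (fun t : ℝ => f (x + t • v)) := by
    have := hc.comp_affineMap (AffineMap.lineMap x y : ℝ →ᵃ[ℝ] F)
    have heq : (f ∘ (AffineMap.lineMap x y : ℝ →ᵃ[ℝ] F)) = fun t : ℝ => f (x + t • v) := by
      funext t
      simp [AffineMap.lineMap_apply, hv, add_comm]
    rw [heq] at this
    simpa using this
  have hd : HasDerivAt (fun t : ℝ => f (x + t • v)) ⟪gradient f x, v⟫ 0 := by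
    have := line_hasDerivAt hf x v 0
    simpa using this
  have := hconv.le_slope_of_hasDerivAt (mem_univ (0:ℝ)) (mem_univ (1:ℝ)) zero_lt_one hd
  rw [slope_def_field] at this
  simp only [one_smul, zero_smul, add_zero, sub_zero, div_one] at this
  have h1 : x + v = y := by rw [hv]; abel
  rw [h1] at this
  linarith

lemma descent_lemma {f : F → ℝ} (hf : Differentiable ℝ f) {L : ℝ} (hL : 0 ≤ L)
    (hlip : ∀ a b, ‖gradient f a - gradient f b‖ ≤ L * ‖a - b‖) (y z : F) :
    f z ≤ f y + ⟪gradient f y, z - y⟫ + L / 2 * ‖z - y‖ ^ 2 := by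
  set v := z - y with hv
  set φ : ℝ → ℝ := fun t => ⟪gradient f (y + t • v), v⟫ with hφ
  have hgradcont : Continuous (gradient f) := by
    have : LipschitzWith L.toNNReal (gradient f) := by
      apply LipschitzWith.of_dist_le_mul
      intro a b
      simpa [dist_eq_norm, Real.coe_toNNReal L hL] using hlip a b
    exact this.continuous
  have hφcont : Continuous φ := by
    apply Continuous.inner
    · exact hgradcont.comp (by continuity)
    · exact continuous_const
  have hint : IntervalIntegrable φ MeasureTheory.volume 0 1 := hφcont.intervalIntegrable _ _
  have heq : ∫ t in (0:ℝ)..1, φ t = f (y + (1:ℝ) • v) - f (y + (0:ℝ) • v) := by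
    refine intervalIntegral.integral_eq_sub_of_hasDerivAt
      (f := fun s : ℝ => f (y + s • v)) (f' := φ) (fun t _ => line_hasDerivAt hf y v t) hint
  have hmono : ∫ t in (0:ℝ)..1, φ t ≤ ∫ t in (0:ℝ)..1, (φ 0 + L * ‖v‖ ^ 2 * t) := by
    apply intervalIntegral.integral_mono_on zero_le_one hint
    · exact (Continuous.intervalIntegrable (by continuity) _ _)
    · intro t ht
      have hdiff : φ t - φ 0 = ⟪gradient f (y + t • v) - gradient f (y + (0:ℝ) • v), v⟫ := by
        rw [inner_sub_left]
      have hb : ⟪gradient f (y + t • v) - gradient f (y + (0:ℝ) • v), v⟫ ≤ L * (t * ‖v‖) * ‖v‖ := by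
        calc ⟪gradient f (y + t • v) - gradient f (y + (0:ℝ) • v), v⟫
            ≤ ‖gradient f (y + t • v) - gradient f (y + (0:ℝ) • v)‖ * ‖v‖ :=
              real_inner_le_norm _ _
          _ ≤ (L * ‖(y + t • v) - (y + (0:ℝ) • v)‖) * ‖v‖ := by
              gcongr; exact hlip _ _
          _ = L * (t * ‖v‖) * ‖v‖ := by
              congr 2
              simp [norm_smul, abs_of_nonneg ht.1]
      nlinarith [hdiff, hb]
  have hrhs : ∫ t in (0:ℝ)..1, (φ 0 + L * ‖v‖ ^ 2 * t) = φ 0 + L * ‖v‖ ^ 2 / 2 := by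
    rw [intervalIntegral.integral_add (intervalIntegrable_const)
      ((Continuous.intervalIntegrable (by continuity) _ _)),
      intervalIntegral.integral_const_mul, integral_id]
    simp; ring
  have hφ0 : φ 0 = ⟪gradient f y, z - y⟫ := by simp [hφ, hv]
  have h1 : y + (1:ℝ) • v = z := by rw [hv]; simp
  have h0 : y + (0:ℝ) • v = y := by simp
  rw [h1, h0] at heq
  rw [hrhs, hφ0] at hmono
  linarith [heq, hmono]

lemma inner_concave (c : F) : ConcaveOn ℝ (Set.univ : Set F) (fun z => ⟪c, z⟫) := by
  constructor
  · exact convex_univ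
  · intro a _ b _ s t _ _ _
    apply le_of_eq
    simp [inner_add_right, inner_smul_right]

lemma bregman {f : F → ℝ} (hc : ConvexOn ℝ Set.univ f) (hf : Differentiable ℝ f) {L : ℝ}
    (hL : 0 < L) (hlip : ∀ a b, ‖gradient f a - gradient f b‖ ≤ L * ‖a - b‖) (x y : F) :
    ‖gradient f y - gradient f x‖ ^ 2 ≤ 2 * L * (f y - f x - ⟪gradient f x, y - x⟫) := by
  set c := gradient f x with hcdef
  set φ : F → ℝ := fun z => f z - ⟪c, z⟫ with hφdef
  have hφgrad : ∀ z, HasGradientAt φ (gradient f z - c) z := by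
    intro z
    have h1 : HasFDerivAt f (toDual ℝ F (gradient f z)) z := (hf z).hasGradientAt
    have h2 : HasFDerivAt (fun w => ⟪c, w⟫) (toDual ℝ F c) z := by
      have := (toDual ℝ F c).hasFDerivAt (x := z)
      apply this.congr_of_eventuallyEq
      filter_upwards with w
      simp [toDual_apply_apply]
    have := h1.sub h2
    rw [← map_sub] at this
    exact this
  have hφgradeq : ∀ z, gradient φ z = gradient f z - c := fun z => (hφgrad z).gradient
  have hφdiff : Differentiable ℝ φ := fun z => (hφgrad z).differentiableAt
  have hφconv : ConvexOn ℝ Set.univ φ := hc.sub (inner_concave c)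
  have hφlip : ∀ a b, ‖gradient φ a - gradient φ b‖ ≤ L * ‖a - b‖ := by
    intro a b
    rw [hφgradeq, hφgradeq, sub_sub_sub_cancel_right]
    exact hlip a b
  set g := gradient f y - c with hgdef
  set z := y - L⁻¹ • g with hzdef
  have hdesc := descent_lemma hφdiff hL.le hφlip y z
  have hlow := convex_grad_ineq hφconv hφdiff x z
  have hgx : gradient φ x = 0 := by rw [hφgradeq]; simp [hcdef]
  rw [hgx] at hlow
  simp only [inner_zero_left, add_zero] at hlow
  have hgy : gradient φ y = g := hφgradeq y
  rw [hgy] at hdesc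
  have hzy : z - y = -(L⁻¹ • g) := by rw [hzdef]; abel
  rw [hzy] at hdesc
  have hin : ⟪g, -(L⁻¹ • g)⟫ = -(L⁻¹ * ‖g‖ ^ 2) := by
    rw [inner_neg_right, real_inner_smul_right, real_inner_self_eq_norm_sq]
  have hnr : ‖-(L⁻¹ • g)‖ ^ 2 = L⁻¹ ^ 2 * ‖g‖ ^ 2 := by
    rw [norm_neg, norm_smul, Real.norm_eq_abs, abs_inv, abs_of_pos hL]
    ring
  rw [hin, hnr] at hdesc
  -- φ x ≤ φ z ≤ φ y - ‖g‖²/(2L)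
  have hchain : φ x ≤ φ y + -(L⁻¹ * ‖g‖ ^ 2) + L / 2 * (L⁻¹ ^ 2 * ‖g‖ ^ 2) :=
    le_trans hlow hdesc
  have key : φ x ≤ φ y - ‖g‖ ^ 2 / (2 * L) := by
    have hLne : L ≠ 0 := hL.ne'
    have : L / 2 * (L⁻¹ ^ 2 * ‖g‖ ^ 2) = ‖g‖ ^ 2 / (2 * L) := by
      field_simp
    have h2 : L⁻¹ * ‖g‖ ^ 2 - ‖g‖ ^ 2 / (2 * L) = ‖g‖ ^ 2 / (2 * L) := by
      field_simp; ring
    linarith [hchain, this, h2]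
  have hφ_diff : φ y - φ x = f y - f x - ⟪c, y - x⟫ := by
    simp only [hφdef]
    rw [inner_sub_right]
    ring
  have : ‖g‖ ^ 2 / (2 * L) ≤ φ y - φ x := by linarith
  rw [hφ_diff] at this
  rw [div_le_iff₀ (by positivity)] at this
  calc ‖g‖ ^ 2 ≤ (f y - f x - ⟪c, y - x⟫) * (2 * L) := this
    _ = 2 * L * (f y - f x - ⟪c, y - x⟫) := by ring

/-- tighter (Bregman-divergence) variance bound for the SVRG estimator. -/
theorem stmt_3 (d n : ℕ) (hn : 0 < n) (L : ℝ) (hL : 0 < L)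
    (f : Fin n → EuclideanSpace ℝ (Fin d) → ℝ)
    (hconv : ∀ i, ConvexOn ℝ Set.univ (f i))
    (hdiff : ∀ i, Differentiable ℝ (f i))
    (hlip : ∀ i x y, ‖gradient (f i) x - gradient (f i) y‖ ≤ L * ‖x - y‖)
    (favg : EuclideanSpace ℝ (Fin d) → ℝ)
    (hfavg : ∀ x, favg x = (1 / n : ℝ) * ∑ i, f i x)
    (xstar : EuclideanSpace ℝ (Fin d))
    (hmin : ∀ x, favg xstar ≤ favg x)
    (x xt : EuclideanSpace ℝ (Fin d)) :
    (1 / n : ℝ) * ∑ i,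
        ‖(gradient (f i) x - gradient (f i) xt + gradient favg xt) - gradient favg x‖ ^ 2
      ≤ 2 * L * (favg xt - favg x - ⟪gradient favg x, xt - x⟫) := by
  have npos : (0:ℝ) < n := by exact_mod_cast hn
  -- gradient of the average
  have hgradfavg : ∀ z : EuclideanSpace ℝ (Fin d), gradient favg z = (n:ℝ)⁻¹ • ∑ i, gradient (f i) z := by
    intro z
    have hsum : HasFDerivAt (fun w => ∑ i, f i w)
        (∑ i, toDual ℝ (EuclideanSpace ℝ (Fin d)) (gradient (f i) z)) z :=
      HasFDerivAt.fun_sum (fun i _ => hasGradientAt_iff_hasFDerivAt.mp (hdiff i z).hasGradientAt)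
    have h2 : HasFDerivAt favg ((n:ℝ)⁻¹ • ∑ i, toDual ℝ (EuclideanSpace ℝ (Fin d)) (gradient (f i) z)) z := by
      have := hsum.const_mul ((n:ℝ)⁻¹)
      have hfe : favg = fun w => (n:ℝ)⁻¹ * ∑ i, f i w := by
        funext w; rw [hfavg w, one_div]
      rw [hfe]
      exact this
    have h3 : HasGradientAt favg ((n:ℝ)⁻¹ • ∑ i, gradient (f i) z) z := by
      rw [hasGradientAt_iff_hasFDerivAt, map_smul, map_sum]
      exact h2
    exact h3.gradient
  rw [hgradfavg x, hgradfavg xt]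
  set A : Fin n → EuclideanSpace ℝ (Fin d) := fun i => gradient (f i) x - gradient (f i) xt with hA
  set S : EuclideanSpace ℝ (Fin d) := ∑ i, A i with hS
  have hSsplit : S = ∑ j, gradient (f j) x - ∑ j, gradient (f j) xt := by
    rw [hS, Finset.sum_sub_distrib]
  have hterm : ∀ i : Fin n,
      (gradient (f i) x - gradient (f i) xt + (n:ℝ)⁻¹ • ∑ j, gradient (f j) xt)
        - (n:ℝ)⁻¹ • ∑ j, gradient (f j) x = A i - (n:ℝ)⁻¹ • S := by
    intro i
    rw [hA]
    have : (n:ℝ)⁻¹ • S = (n:ℝ)⁻¹ • ∑ j, gradient (f j) x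
        - (n:ℝ)⁻¹ • ∑ j, gradient (f j) xt := by rw [hSsplit, smul_sub]
    rw [this]
    module
  have hsumin : ∑ i, ⟪A i, S⟫ = ‖S‖ ^ 2 := by
    rw [← sum_inner, ← real_inner_self_eq_norm_sq]
  have expand : ∀ i : Fin n, ‖A i - (n:ℝ)⁻¹ • S‖ ^ 2
      = ‖A i‖ ^ 2 - 2 * ((n:ℝ)⁻¹ * ⟪A i, S⟫) + (n:ℝ)⁻¹ ^ 2 * ‖S‖ ^ 2 := by
    intro i
    rw [norm_sub_sq_real, real_inner_smul_right, norm_smul, Real.norm_eq_abs, abs_inv,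
      abs_of_pos npos, mul_pow]
  have hvar : ∑ i, ‖A i - (n:ℝ)⁻¹ • S‖ ^ 2 ≤ ∑ i, ‖A i‖ ^ 2 := by
    calc ∑ i, ‖A i - (n:ℝ)⁻¹ • S‖ ^ 2
        = ∑ i, (‖A i‖ ^ 2 - 2 * ((n:ℝ)⁻¹ * ⟪A i, S⟫) + (n:ℝ)⁻¹ ^ 2 * ‖S‖ ^ 2) :=
          Finset.sum_congr rfl (fun i _ => expand i)
      _ = ∑ i, ‖A i‖ ^ 2 - 2 * ((n:ℝ)⁻¹ * ‖S‖ ^ 2) + n * ((n:ℝ)⁻¹ ^ 2 * ‖S‖ ^ 2) := by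
          rw [Finset.sum_add_distrib, Finset.sum_sub_distrib, Finset.sum_const,
            Finset.card_univ, Fintype.card_fin]
          congr 2
          · rw [← Finset.mul_sum, ← Finset.mul_sum, hsumin]
          · simp [nsmul_eq_mul]
      _ ≤ ∑ i, ‖A i‖ ^ 2 := by
          have h1 : (n:ℝ) * ((n:ℝ)⁻¹ ^ 2 * ‖S‖ ^ 2) = (n:ℝ)⁻¹ * ‖S‖ ^ 2 := by
            field_simp
          have h2 : 0 ≤ (n:ℝ)⁻¹ * ‖S‖ ^ 2 := by positivity
          rw [h1]; linarith
  have hbi : ∀ i : Fin n,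
      ‖A i‖ ^ 2 ≤ 2 * L * (f i xt - f i x - ⟪gradient (f i) x, xt - x⟫) := by
    intro i
    have hb := bregman (hconv i) (hdiff i) hL (fun a b => hlip i a b) x xt
    calc ‖A i‖ ^ 2 = ‖gradient (f i) xt - gradient (f i) x‖ ^ 2 := by rw [hA, norm_sub_rev]
      _ ≤ _ := hb
  have hfinal : (1 / n : ℝ) * ∑ i, (2 * L * (f i xt - f i x - ⟪gradient (f i) x, xt - x⟫))
      = 2 * L * (favg xt - favg x - ⟪(n:ℝ)⁻¹ • ∑ i, gradient (f i) x, xt - x⟫) := by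
    have hinner : ⟪(n:ℝ)⁻¹ • ∑ i, gradient (f i) x, xt - x⟫
        = (n:ℝ)⁻¹ * ∑ i, ⟪gradient (f i) x, xt - x⟫ := by
      rw [real_inner_smul_left, sum_inner]
    rw [hinner, hfavg, hfavg, ← Finset.mul_sum, Finset.sum_sub_distrib, Finset.sum_sub_distrib,
      one_div]
    ring
  calc (1 / n : ℝ) * ∑ i,
        ‖(gradient (f i) x - gradient (f i) xt + (n:ℝ)⁻¹ • ∑ j, gradient (f j) xt)
          - (n:ℝ)⁻¹ • ∑ j, gradient (f j) x‖ ^ 2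
      = (1 / n : ℝ) * ∑ i, ‖A i - (n:ℝ)⁻¹ • S‖ ^ 2 := by
        congr 1
        exact Finset.sum_congr rfl (fun i _ => by rw [hterm i])
    _ ≤ (1 / n : ℝ) * ∑ i, ‖A i‖ ^ 2 :=
        mul_le_mul_of_nonneg_left hvar (by positivity)
    _ ≤ (1 / n : ℝ) * ∑ i, (2 * L * (f i xt - f i x - ⟪gradient (f i) x, xt - x⟫)) :=
        mul_le_mul_of_nonneg_left (Finset.sum_le_sum (fun i _ => hbi i)) (by positivity)
    _ = _ := hfinal
end

section
/- Mini-batch variance bound: Let f_i : ℝ^d → ℝ be convex and L-smooth, f = (1/n)∑f_i with minimizer x*. For a uniformly random subset I ⊂ [n] of size b (sampled without replacement), define g_I = (1/b)∑_{i∈I}[∇f_i(x) − ∇f_i(x̃)] + ∇f(x̃). Then E‖g_I − ∇f(x)‖² ≤ 4L δ(b) [ f(x) − f(x*) + f(x̃) − f(x*) ], where δ(b) = (n − b)/((n − 1)b). -/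
open scoped BigOperators
open Finset Set intervalIntegral


section Aux
variable {d : ℕ}
local notation "E" => EuclideanSpace ℝ (Fin d)
local notation "⟪" x ", " y "⟫" => @inner ℝ _ _ x y

lemma aux_inner_fderiv (g : E → ℝ) {p : E} (hg : DifferentiableAt ℝ g p) (v : E) :
    fderiv ℝ g p v = ⟪gradient g p, v⟫ := by
  rw [hg.hasGradientAt.hasFDerivAt.fderiv]
  simp [InnerProductSpace.toDual_apply_apply]

lemma aux_hasDeriv_line (g : E → ℝ) (hg : Differentiable ℝ g) (p v : E) (t : ℝ) :
    HasDerivAt (fun s : ℝ => g (p + s • v)) ⟪gradient g (p + t • v), v⟫ t := by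
  have h1 : HasDerivAt (fun s : ℝ => p + s • v) v t := by
    simpa using ((hasDerivAt_id t).smul_const v).const_add p
  have h2 := ((hg (p + t • v)).hasFDerivAt).comp_hasDerivAt t h1
  rwa [aux_inner_fderiv g (hg _) v] at h2

lemma aux_descent (g : E → ℝ) (hg : Differentiable ℝ g) {L : ℝ} (hL : 0 ≤ L)
    (hlip : ∀ u w, ‖gradient g u - gradient g w‖ ≤ L * ‖u - w‖) (p q : E) :
    g q ≤ g p + ⟪gradient g p, q - p⟫ + L / 2 * ‖q - p‖ ^ 2 := by
  set v := q - p with hv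
  have hgc : Continuous (gradient g) := by
    refine (LipschitzWith.of_dist_le_mul (K := L.toNNReal) ?_).continuous
    intro u w
    simpa [dist_eq_norm, Real.coe_toNNReal L hL] using hlip u w
  have hcont : Continuous fun t : ℝ => ⟪gradient g (p + t • v), v⟫ := by
    exact Continuous.inner (hgc.comp (by continuity)) continuous_const
  have hint : IntervalIntegrable (fun t => ⟪gradient g (p + t • v), v⟫)
      MeasureTheory.volume 0 1 := hcont.intervalIntegrable 0 1
  have heq : ∫ t in (0:ℝ)..1, ⟪gradient g (p + t • v), v⟫
      = g (p + (1:ℝ) • v) - g (p + (0:ℝ) • v) :=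
    intervalIntegral.integral_eq_sub_of_hasDerivAt
      (fun t _ => aux_hasDeriv_line g hg p v t) hint
  have heq' : ∫ t in (0:ℝ)..1, ⟪gradient g (p + t • v), v⟫ = g q - g p := by
    rw [heq]; norm_num [hv]
  have hbound : ∫ t in (0:ℝ)..1, ⟪gradient g (p + t • v), v⟫
      ≤ ∫ t in (0:ℝ)..1, (⟪gradient g p, v⟫ + L * ‖v‖ ^ 2 * t) := by
    apply intervalIntegral.integral_mono_on (by norm_num) hint
    · exact (Continuous.intervalIntegrable (by continuity) 0 1)
    · intro t ht
      obtain ⟨ht0, ht1⟩ := ht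
      have h1 : ⟪gradient g (p + t • v) - gradient g p, v⟫
          ≤ ‖gradient g (p + t • v) - gradient g p‖ * ‖v‖ := real_inner_le_norm _ _
      have h2 : ‖gradient g (p + t • v) - gradient g p‖ ≤ L * ‖t • v‖ := by
        simpa [add_sub_cancel_left] using hlip (p + t • v) p
      have h3 : ‖t • v‖ = t * ‖v‖ := by
        rw [norm_smul, Real.norm_eq_abs, abs_of_nonneg ht0]
      have h4 : ⟪gradient g (p + t • v), v⟫
          = ⟪gradient g p, v⟫ + ⟪gradient g (p + t • v) - gradient g p, v⟫ := by
        rw [inner_sub_left]; ring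
      rw [h4]
      have h5 : ‖gradient g (p + t • v) - gradient g p‖ * ‖v‖ ≤ L * t * ‖v‖ ^ 2 := by
        rw [h3] at h2
        nlinarith [norm_nonneg v, norm_nonneg (gradient g (p + t • v) - gradient g p)]
      nlinarith
  have hval : ∫ t in (0:ℝ)..1, (⟪gradient g p, v⟫ + L * ‖v‖ ^ 2 * t)
      = ⟪gradient g p, v⟫ + L * ‖v‖ ^ 2 / 2 := by
    rw [intervalIntegral.integral_add (intervalIntegrable_const)
      ((by fun_prop : Continuous fun t : ℝ => L * ‖v‖ ^ 2 * t).intervalIntegrable 0 1)]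
    rw [intervalIntegral.integral_const, integral_const_mul, integral_id]
    simp
    ring
  rw [heq'] at hbound
  rw [hval] at hbound
  linarith

lemma aux_convex_lower (g : E → ℝ) (hg : Differentiable ℝ g)
    (hconv : ConvexOn ℝ Set.univ g) (p q : E) :
    g p + ⟪gradient g p, q - p⟫ ≤ g q := by
  set v := q - p with hv
  set φ : ℝ → ℝ := fun t => g (p + t • v) with hφ
  have hφc : ConvexOn ℝ Set.univ φ := by
    refine ⟨convex_univ, ?_⟩
    intro s _ t _ a c ha hc hac
    have hpt : p + (a * s + c * t) • v = a • (p + s • v) + c • (p + t • v) := by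
      have h1 : (1:ℝ) • p = p := one_smul ℝ p
      rw [smul_add, smul_add, smul_smul, smul_smul, ← add_assoc,
        show a • p + (a * s) • v + c • p = a • p + c • p + (a * s) • v by abel,
        ← add_smul, hac, h1]
      rw [add_smul, add_assoc]
    show g (p + (a * s + c * t) • v) ≤ a * g (p + s • v) + c * g (p + t • v)
    rw [hpt]
    exact hconv.2 (Set.mem_univ _) (Set.mem_univ _) ha hc hac
  have hd0 : HasDerivAt φ ⟪gradient g p, v⟫ 0 := by
    have := aux_hasDeriv_line g hg p v 0
    simpa using this
  have hs := hφc.le_slope_of_hasDerivAt (Set.mem_univ (0:ℝ)) (Set.mem_univ 1) one_pos hd0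
  have : slope φ 0 1 = φ 1 - φ 0 := by simp [slope_def_field]
  rw [this] at hs
  have h1 : φ 1 = g q := by simp [hφ, hv]
  have h0 : φ 0 = g p := by simp [hφ]
  rw [h1, h0] at hs
  linarith

end Aux



section Aux2
variable {d : ℕ}
local notation "E" => EuclideanSpace ℝ (Fin d)
local notation "⟪" x ", " y "⟫" => @inner ℝ _ _ x y



lemma aux_coco (g : E → ℝ) (hg : Differentiable ℝ g) (hconv : ConvexOn ℝ Set.univ g)
    {L : ℝ} (hL : 0 < L) (hlip : ∀ u w, ‖gradient g u - gradient g w‖ ≤ L * ‖u - w‖)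
    (p q : E) :
    ‖gradient g p - gradient g q‖ ^ 2 ≤ 2 * L * (g p - g q - ⟪gradient g q, p - q⟫) := by
  set c := gradient g q with hcdef
  set h : E → ℝ := fun z => g z - ⟪c, z⟫ with hh
  have hgradh : ∀ z, HasGradientAt h (gradient g z - c) z := by
    intro z
    rw [hasGradientAt_iff_hasFDerivAt]
    have h1 : HasFDerivAt g (InnerProductSpace.toDual ℝ _ (gradient g z)) z :=
      (hg z).hasGradientAt.hasFDerivAt
    have h2 : HasFDerivAt (fun z : E => ⟪c, z⟫) (InnerProductSpace.toDual ℝ _ c) z := by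
      have he : (InnerProductSpace.toDual ℝ _ c : E →L[ℝ] ℝ) = innerSL ℝ c := by
        ext w; simp [InnerProductSpace.toDual_apply_apply]
      rw [he]; exact (innerSL ℝ c).hasFDerivAt
    have h3 := h1.sub h2
    have he2 : InnerProductSpace.toDual ℝ _ (gradient g z) - InnerProductSpace.toDual ℝ _ c
        = InnerProductSpace.toDual ℝ _ (gradient g z - c) := (map_sub _ _ _).symm
    rwa [he2] at h3
  have hdh : Differentiable ℝ h := fun z => (hgradh z).differentiableAt
  have hgradh' : ∀ z, gradient h z = gradient g z - c := fun z => (hgradh z).gradient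
  have hconvh : ConvexOn ℝ Set.univ h := by
    refine ⟨convex_univ, fun u _ w _ a b ha hb hab => ?_⟩
    have hg2 := hconv.2 (Set.mem_univ u) (Set.mem_univ w) ha hb hab
    show g (a • u + b • w) - ⟪c, a • u + b • w⟫
        ≤ a * (g u - ⟪c, u⟫) + b * (g w - ⟪c, w⟫)
    rw [inner_add_right, real_inner_smul_right, real_inner_smul_right]
    rw [smul_eq_mul, smul_eq_mul] at hg2
    linarith
  have hliph : ∀ u w, ‖gradient h u - gradient h w‖ ≤ L * ‖u - w‖ := by
    intro u w
    rw [hgradh' u, hgradh' w]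
    simpa [sub_sub_sub_cancel_right] using hlip u w
  have hq0 : gradient h q = 0 := by rw [hgradh', hcdef, sub_self]
  have hminh : ∀ z, h q ≤ h z := by
    intro z
    have := aux_convex_lower h hdh hconvh q z
    rwa [hq0, inner_zero_left, add_zero] at this
  have hdesc := aux_descent h hdh hL.le hliph p (p - (1 / L) • gradient h p)
  have e1 : (p - (1 / L) • gradient h p) - p = -((1 / L) • gradient h p) := by
    abel
  rw [e1] at hdesc
  have e2 : ⟪gradient h p, -((1 / L) • gradient h p)⟫ = -(1 / L) * ‖gradient h p‖ ^ 2 := by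
    rw [inner_neg_right, real_inner_smul_right, real_inner_self_eq_norm_sq]
    ring
  have e3 : ‖-((1 / L) • gradient h p)‖ ^ 2 = (1 / L) ^ 2 * ‖gradient h p‖ ^ 2 := by
    rw [norm_neg, norm_smul, Real.norm_eq_abs, abs_of_nonneg (by positivity : (0:ℝ) ≤ 1 / L)]
    ring
  rw [e2, e3] at hdesc
  have hkey : ‖gradient h p‖ ^ 2 ≤ 2 * L * (h p - h q) := by
    have h5 := hminh (p - (1 / L) • gradient h p)
    have hL' : L ≠ 0 := ne_of_gt hL
    have : h q ≤ h p - ‖gradient h p‖ ^ 2 / (2 * L) := by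
      have : h p + -(1 / L) * ‖gradient h p‖ ^ 2 + L / 2 * ((1 / L) ^ 2 * ‖gradient h p‖ ^ 2)
          = h p - ‖gradient h p‖ ^ 2 / (2 * L) := by field_simp; ring
      linarith [hdesc, h5]
    have h2L : 0 < 2 * L := by positivity
    have h6 := (div_le_iff₀ h2L).mp (by linarith : ‖gradient h p‖ ^ 2 / (2 * L) ≤ h p - h q)
    linarith
  rw [hgradh' p] at hkey
  have e4 : h p - h q = g p - g q - ⟪c, p - q⟫ := by
    show (g p - ⟪c, p⟫) - (g q - ⟪c, q⟫) = g p - g q - ⟪c, p - q⟫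
    rw [inner_sub_right]; ring
  rw [e4] at hkey
  exact hkey
end Aux2



lemma aux_bij {α : Type*} [DecidableEq α] {M : Type*} [AddCommMonoid M]
    (u : Finset α) {i : α} (hi : i ∈ u) (m : ℕ) (F : Finset α → M) :
    ∑ I ∈ (u.powersetCard (m+1)).filter (fun I => i ∈ I), F I
      = ∑ J ∈ (u.erase i).powersetCard m, F (insert i J) := by
  refine Finset.sum_nbij' (fun I => I.erase i) (fun J => insert i J) ?_ ?_ ?_ ?_ ?_
  · intro I hI
    simp only [mem_filter, mem_powersetCard] at hI
    obtain ⟨⟨hsub, hcard⟩, hmem⟩ := hI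
    simp only [mem_powersetCard]
    refine ⟨erase_subset_erase i hsub, ?_⟩
    rw [card_erase_of_mem hmem, hcard]
    omega
  · intro J hJ
    simp only [mem_powersetCard] at hJ
    obtain ⟨hsub, hcard⟩ := hJ
    have hiJ : i ∉ J := fun h => (mem_erase.mp (hsub h)).1 rfl
    simp only [mem_filter, mem_powersetCard]
    refine ⟨⟨?_, ?_⟩, mem_insert_self i J⟩
    · exact insert_subset hi (hsub.trans (erase_subset i u))
    · rw [card_insert_of_notMem hiJ, hcard]
  · intro I hI
    simp only [mem_filter] at hI
    exact insert_erase hI.2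
  · intro J hJ
    simp only [mem_powersetCard] at hJ
    have hiJ : i ∉ J := fun h => (mem_erase.mp (hJ.1 h)).1 rfl
    exact erase_insert hiJ
  · intro I hI
    simp only [mem_filter] at hI
    rw [insert_erase hI.2]

lemma aux_swap' {α : Type*} [DecidableEq α] {M : Type*} [AddCommMonoid M]
    (u : Finset α) (k : ℕ) (q : α → Finset α → M) :
    ∑ I ∈ u.powersetCard k, ∑ i ∈ I, q i I
      = ∑ i ∈ u, ∑ I ∈ (u.powersetCard k).filter (fun I => i ∈ I), q i I := by
  have h1 : ∀ I ∈ u.powersetCard k, ∑ i ∈ I, q i I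
      = ∑ i ∈ u, if i ∈ I then q i I else 0 := by
    intro I hI
    rw [Finset.sum_ite_mem, Finset.inter_eq_right.mpr (mem_powersetCard.mp hI).1]
  rw [Finset.sum_congr rfl h1, Finset.sum_comm]
  exact Finset.sum_congr rfl fun i _ => (Finset.sum_filter _ _).symm

lemma aux_swap {α : Type*} [DecidableEq α] {M : Type*} [AddCommMonoid M]
    (u : Finset α) (m : ℕ) (w : α → M) :
    ∑ I ∈ u.powersetCard (m+1), ∑ i ∈ I, w i
      = ∑ i ∈ u, ((u.erase i).powersetCard m).card • w i := by
  rw [aux_swap' u (m+1) (fun i _ => w i)]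
  refine Finset.sum_congr rfl fun i hi => ?_
  rw [aux_bij u hi m (fun _ => w i), Finset.sum_const]

section V
variable {d : ℕ}
local notation "E" => EuclideanSpace ℝ (Fin d)
local notation "⟪" x ", " y "⟫" => @inner ℝ _ _ x y

lemma aux_varsum {n : ℕ} (hn2 : 2 ≤ n) (m : ℕ) (c : Fin n → E)
    (hc : ∑ i, c i = 0) :
    ∑ I ∈ Finset.powersetCard (m+1) (Finset.univ : Finset (Fin n)), ‖∑ i ∈ I, c i‖ ^ 2
      = (((n-1).choose m : ℝ) - (if m = 0 then (0:ℝ) else ((n-2).choose (m-1) : ℝ)))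
          * ∑ i, ‖c i‖ ^ 2 := by
  have hns : ∀ I : Finset (Fin n), ‖∑ i ∈ I, c i‖ ^ 2
      = ∑ i ∈ I, (‖c i‖ ^ 2 + ⟪c i, ∑ j ∈ I.erase i, c j⟫) := by
    intro I
    have h1 : (‖∑ i ∈ I, c i‖ : ℝ) ^ 2 = ⟪∑ i ∈ I, c i, ∑ j ∈ I, c j⟫ :=
      (real_inner_self_eq_norm_sq _).symm
    rw [h1, sum_inner]
    refine Finset.sum_congr rfl fun i hi => ?_
    rw [← Finset.add_sum_erase I c hi, inner_add_right, real_inner_self_eq_norm_sq]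
  have hsplit : ∑ I ∈ Finset.powersetCard (m+1) (Finset.univ : Finset (Fin n)), ‖∑ i ∈ I, c i‖ ^ 2
      = (∑ I ∈ Finset.powersetCard (m+1) (Finset.univ : Finset (Fin n)), ∑ i ∈ I, ‖c i‖ ^ 2)
        + ∑ I ∈ Finset.powersetCard (m+1) (Finset.univ : Finset (Fin n)),
            ∑ i ∈ I, ⟪c i, ∑ j ∈ I.erase i, c j⟫ := by
    rw [← Finset.sum_add_distrib]
    exact Finset.sum_congr rfl fun I _ => (hns I).trans Finset.sum_add_distrib
  have hcard1 : ∀ i : Fin n, (((Finset.univ : Finset (Fin n)).erase i).powersetCard m).card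
      = (n-1).choose m := by
    intro i
    rw [Finset.card_powersetCard, Finset.card_erase_of_mem (Finset.mem_univ i),
      Finset.card_univ, Fintype.card_fin]
  have hp1 : ∑ I ∈ Finset.powersetCard (m+1) (Finset.univ : Finset (Fin n)), ∑ i ∈ I, ‖c i‖ ^ 2
      = ((n-1).choose m : ℝ) * ∑ i, ‖c i‖ ^ 2 := by
    rw [aux_swap, Finset.mul_sum]
    exact Finset.sum_congr rfl fun i _ => by rw [hcard1 i, nsmul_eq_mul]
  have hp2 : ∑ I ∈ Finset.powersetCard (m+1) (Finset.univ : Finset (Fin n)),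
        ∑ i ∈ I, ⟪c i, ∑ j ∈ I.erase i, c j⟫
      = ∑ i : Fin n, ∑ J ∈ ((Finset.univ : Finset (Fin n)).erase i).powersetCard m,
          ⟪c i, ∑ j ∈ J, c j⟫ := by
    rw [aux_swap']
    refine Finset.sum_congr rfl fun i _ => ?_
    rw [aux_bij Finset.univ (Finset.mem_univ i) m
      (fun I => ⟪c i, ∑ j ∈ I.erase i, c j⟫)]
    refine Finset.sum_congr rfl fun J hJ => ?_
    have hiJ : i ∉ J := fun h =>
      (Finset.mem_erase.mp ((Finset.mem_powersetCard.mp hJ).1 h)).1 rfl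
    rw [Finset.erase_insert hiJ]
  rw [hsplit, hp1, hp2]
  rcases Nat.eq_zero_or_pos m with hm | hm
  · subst hm
    simp only [Finset.powersetCard_zero]
    simp [inner_zero_right]
  · obtain ⟨m', rfl⟩ : ∃ m', m = m' + 1 := ⟨m - 1, by omega⟩
    have hcross : ∀ i : Fin n,
        ∑ J ∈ ((Finset.univ : Finset (Fin n)).erase i).powersetCard (m'+1),
          ⟪c i, ∑ j ∈ J, c j⟫ = -(((n-2).choose m' : ℝ) * ‖c i‖ ^ 2) := by
      intro i
      have h1 : ∀ J : Finset (Fin n), ⟪c i, ∑ j ∈ J, c j⟫ = ∑ j ∈ J, ⟪c i, c j⟫ :=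
        fun J => inner_sum J c (c i)
      rw [Finset.sum_congr rfl fun J _ => h1 J, aux_swap]
      have hcard2 : ∀ j ∈ (Finset.univ : Finset (Fin n)).erase i,
          ((((Finset.univ : Finset (Fin n)).erase i).erase j).powersetCard m').card
            = (n-2).choose m' := by
        intro j hj
        rw [Finset.card_powersetCard, Finset.card_erase_of_mem hj,
          Finset.card_erase_of_mem (Finset.mem_univ i), Finset.card_univ, Fintype.card_fin,
          show n - 1 - 1 = n - 2 from by omega]
      have h2 : ∑ j ∈ (Finset.univ : Finset (Fin n)).erase i, ⟪c i, c j⟫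
          = -‖c i‖ ^ 2 := by
        rw [← inner_sum, Finset.sum_erase_eq_sub (Finset.mem_univ i), hc, zero_sub,
          inner_neg_right, real_inner_self_eq_norm_sq]
      calc ∑ j ∈ (Finset.univ : Finset (Fin n)).erase i,
            ((((Finset.univ : Finset (Fin n)).erase i).erase j).powersetCard m').card • ⟪c i, c j⟫
          = ∑ j ∈ (Finset.univ : Finset (Fin n)).erase i, ((n-2).choose m' : ℝ) * ⟪c i, c j⟫ := by
            refine Finset.sum_congr rfl fun j hj => ?_
            rw [hcard2 j hj, nsmul_eq_mul]
        _ = ((n-2).choose m' : ℝ) * ∑ j ∈ (Finset.univ : Finset (Fin n)).erase i, ⟪c i, c j⟫ := by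
            rw [Finset.mul_sum]
        _ = -(((n-2).choose m' : ℝ) * ‖c i‖ ^ 2) := by rw [h2]; ring
    rw [Finset.sum_congr rfl fun i _ => hcross i]
    simp only [Nat.add_sub_cancel, if_neg (Nat.succ_ne_zero m')]
    rw [Finset.sum_neg_distrib, ← Finset.mul_sum]
    ring
end V


lemma aux_choose (n m : ℕ) (hn : 2 ≤ n) (hb : m + 1 ≤ n) :
    (((n-1).choose m : ℝ) - (if m = 0 then (0:ℝ) else ((n-2).choose (m-1) : ℝ)))
        * ((n:ℝ) * ((n:ℝ) - 1))
      = (n.choose (m+1) : ℝ) * ((m:ℝ) + 1) * ((n:ℝ) - ((m:ℝ) + 1)) := by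
  have hn1 : 1 ≤ n := by omega
  have i1nat : n * (n-1).choose m = n.choose (m+1) * (m+1) := by
    have h := Nat.add_one_mul_choose_eq (n-1) m
    have h2 : n - 1 + 1 = n := by omega
    rwa [h2] at h
  have e1 : ((n-1).choose m : ℝ) * (n:ℝ) = (n.choose (m+1) : ℝ) * ((m:ℝ) + 1) := by
    have := congrArg (Nat.cast : ℕ → ℝ) i1nat
    push_cast at this
    linarith
  rcases Nat.eq_zero_or_pos m with hm | hm
  · subst hm
    simp only [Nat.choose_zero_right, Nat.cast_one, one_mul] at e1 ⊢
    push_cast at e1 ⊢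
    linear_combination ((n:ℝ) - 1) * e1
  · obtain ⟨m', rfl⟩ : ∃ m', m = m' + 1 := ⟨m - 1, by omega⟩
    have i2nat : (n-1) * (n-2).choose m' = (n-1).choose (m'+1) * (m'+1) := by
      have h := Nat.add_one_mul_choose_eq (n-2) m'
      have h2 : n - 2 + 1 = n - 1 := by omega
      rwa [h2] at h
    have e2 : ((n-2).choose m' : ℝ) * ((n:ℝ) - 1)
        = ((n-1).choose (m'+1) : ℝ) * ((m':ℝ) + 1) := by
      have := congrArg (Nat.cast : ℕ → ℝ) i2nat
      push_cast [Nat.cast_sub hn1] at this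
      linarith
    simp only [if_neg (Nat.succ_ne_zero m'), Nat.add_sub_cancel]
    push_cast at e1 e2 ⊢
    linear_combination ((n:ℝ) - ((m':ℝ) + 2)) * e1 - (n:ℝ) * e2


section Main
variable {d : ℕ}
local notation "E" => EuclideanSpace ℝ (Fin d)
local notation "⟪" x ", " y "⟫" => @inner ℝ _ _ x y

lemma aux_two (u v : E) : ‖u - v‖ ^ 2 ≤ 2 * ‖u‖ ^ 2 + 2 * ‖v‖ ^ 2 := by
  have h := norm_sub_sq_real u v
  have h3 : -(‖u‖ * ‖v‖) ≤ ⟪u, v⟫ := (abs_le.mp (abs_real_inner_le_norm u v)).1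
  nlinarith [sq_nonneg (‖u‖ - ‖v‖), norm_nonneg u, norm_nonneg v]

end Main

/-- mini-batch variance bound for the SVRG gradient estimator, where the
expectation is the uniform average over all size-`b` subsets of `[n]`. -/
theorem stmt_4 (d n b : ℕ) (hn : 1 < n) (hb : 0 < b) (hbn : b ≤ n)
    (L : ℝ) (hL : 0 < L)
    (f : Fin n → EuclideanSpace ℝ (Fin d) → ℝ)
    (hconv : ∀ i, ConvexOn ℝ Set.univ (f i))
    (hdiff : ∀ i, Differentiable ℝ (f i))
    (hlip : ∀ i x y, ‖gradient (f i) x - gradient (f i) y‖ ≤ L * ‖x - y‖)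
    (favg : EuclideanSpace ℝ (Fin d) → ℝ)
    (hfavg : ∀ x, favg x = (1 / n : ℝ) * ∑ i, f i x)
    (xstar : EuclideanSpace ℝ (Fin d))
    (hmin : ∀ x, favg xstar ≤ favg x)
    (x xt : EuclideanSpace ℝ (Fin d)) :
    ((Finset.powersetCard b (Finset.univ : Finset (Fin n))).card : ℝ)⁻¹ *
        ∑ I ∈ Finset.powersetCard b (Finset.univ : Finset (Fin n)),
          ‖((1 / b : ℝ) • ∑ i ∈ I, (gradient (f i) x - gradient (f i) xt)
              + gradient favg xt) - gradient favg x‖ ^ 2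
      ≤ 4 * L * (((n : ℝ) - b) / (((n : ℝ) - 1) * b)) *
          ((favg x - favg xstar) + (favg xt - favg xstar)) := by
  have hn2 : 2 ≤ n := hn
  have hnR : (0:ℝ) < n := by exact_mod_cast (by omega : 0 < n)
  have hn1R : (0:ℝ) < (n:ℝ) - 1 := by
    have : (2:ℝ) ≤ n := by exact_mod_cast hn2
    linarith
  have hbR : (0:ℝ) < b := by exact_mod_cast hb
  have hbnR : (b:ℝ) ≤ n := by exact_mod_cast hbn
  -- gradient of favg
  have hgF : ∀ z : EuclideanSpace ℝ (Fin d),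
      HasGradientAt favg ((n:ℝ)⁻¹ • ∑ i, gradient (f i) z) z := by
    intro z
    have h1 : HasFDerivAt (fun y => ∑ i, f i y)
        (∑ i, InnerProductSpace.toDual ℝ _ (gradient (f i) z)) z :=
      HasFDerivAt.fun_sum fun i _ => ((hdiff i) z).hasGradientAt.hasFDerivAt
    have h2 : HasFDerivAt (fun y => (1 / n : ℝ) * ∑ i, f i y)
        ((1 / n : ℝ) • ∑ i, InnerProductSpace.toDual ℝ _ (gradient (f i) z)) z :=
      h1.const_mul _
    have h3 : favg = fun y => (1 / n : ℝ) * ∑ i, f i y := funext hfavg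
    rw [hasGradientAt_iff_hasFDerivAt, h3]
    have h4 : InnerProductSpace.toDual ℝ _ ((n:ℝ)⁻¹ • ∑ i, gradient (f i) z)
        = (1 / n : ℝ) • ∑ i, InnerProductSpace.toDual ℝ _ (gradient (f i) z) := by
      rw [map_smul, map_sum]
      simp [one_div]
    rw [h4]
    exact h2
  have gradfavg : ∀ z, gradient favg z = (n:ℝ)⁻¹ • ∑ i, gradient (f i) z :=
    fun z => (hgF z).gradient
  have hdfavg : Differentiable ℝ favg := fun z => (hgF z).differentiableAt
  have hstar0 : gradient favg xstar = 0 := by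
    have hloc : IsLocalMin favg xstar := Filter.Eventually.of_forall hmin
    have := hloc.fderiv_eq_zero
    rw [gradient, this, map_zero]
  have hsumstar : ∑ i, gradient (f i) xstar = 0 := by
    have h1 := (gradfavg xstar).symm.trans hstar0
    rcases smul_eq_zero.mp h1 with h | h
    · exact absurd h (by positivity)
    · exact h
  have hsum_f : ∀ w, (∑ i, f i w) = (n:ℝ) * favg w := by
    intro w
    rw [hfavg w]
    field_simp
  -- cocoercivity sums
  have hco : ∀ z : EuclideanSpace ℝ (Fin d),
      ∑ i, ‖gradient (f i) z - gradient (f i) xstar‖ ^ 2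
        ≤ 2 * L * (n:ℝ) * (favg z - favg xstar) := by
    intro z
    have h1 : ∑ i, ‖gradient (f i) z - gradient (f i) xstar‖ ^ 2
        ≤ ∑ i, 2 * L * (f i z - f i xstar
            - @inner ℝ _ _ (gradient (f i) xstar) (z - xstar)) :=
      Finset.sum_le_sum fun i _ =>
        aux_coco (f i) (hdiff i) (hconv i) hL (hlip i) z xstar
    have h2 : ∑ i, 2 * L * (f i z - f i xstar
          - @inner ℝ _ _ (gradient (f i) xstar) (z - xstar))
        = 2 * L * ((∑ i, f i z) - (∑ i, f i xstar)
            - @inner ℝ _ _ (∑ i, gradient (f i) xstar) (z - xstar)) := by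
      rw [← Finset.mul_sum, sum_inner]
      congr 1
      rw [Finset.sum_sub_distrib, Finset.sum_sub_distrib]
    rw [h2, hsumstar, inner_zero_left, sub_zero, hsum_f z, hsum_f xstar] at h1
    calc ∑ i, ‖gradient (f i) z - gradient (f i) xstar‖ ^ 2
        ≤ 2 * L * ((n:ℝ) * favg z - (n:ℝ) * favg xstar) := h1
      _ = 2 * L * (n:ℝ) * (favg z - favg xstar) := by ring
  -- setup
  obtain ⟨m, rfl⟩ : ∃ m, b = m + 1 := ⟨b - 1, by omega⟩
  set a : Fin n → EuclideanSpace ℝ (Fin d) :=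
    fun i => gradient (f i) x - gradient (f i) xt with ha
  set abar : EuclideanSpace ℝ (Fin d) := (n:ℝ)⁻¹ • ∑ i, a i with habardef
  set cc : Fin n → EuclideanSpace ℝ (Fin d) := fun i => a i - abar with hcc
  have hsum_a : ∑ i, a i = (n:ℝ) • abar := by
    rw [habardef, smul_smul, mul_inv_cancel₀ (ne_of_gt hnR), one_smul]
  have hc : ∑ i, cc i = 0 := by
    simp only [hcc]
    rw [Finset.sum_sub_distrib, Finset.sum_const, Finset.card_univ, Fintype.card_fin,
      ← Nat.cast_smul_eq_nsmul ℝ, ← hsum_a, sub_self]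
  have habar2 : gradient favg x - gradient favg xt = abar := by
    rw [gradfavg x, gradfavg xt, habardef, ← smul_sub, ← Finset.sum_sub_distrib]
  have hb1R : (0:ℝ) < ((m+1 : ℕ) : ℝ) := by exact_mod_cast Nat.succ_pos m
  have hterm : ∀ I ∈ Finset.powersetCard (m+1) (Finset.univ : Finset (Fin n)),
      ‖((1 / ((m+1:ℕ) : ℝ)) • ∑ i ∈ I, (gradient (f i) x - gradient (f i) xt)
          + gradient favg xt) - gradient favg x‖ ^ 2
        = (((m+1:ℕ):ℝ))⁻¹ ^ 2 * ‖∑ i ∈ I, cc i‖ ^ 2 := by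
    intro I hI
    have hIcard : I.card = m + 1 := (Finset.mem_powersetCard.mp hI).2
    have h2 : ∑ i ∈ I, cc i = (∑ i ∈ I, a i) - ((m+1:ℕ):ℝ) • abar := by
      simp only [hcc]
      rw [Finset.sum_sub_distrib, Finset.sum_const, hIcard, ← Nat.cast_smul_eq_nsmul ℝ]
    have h3 : ((1 / ((m+1:ℕ):ℝ)) • ∑ i ∈ I, (gradient (f i) x - gradient (f i) xt)
          + gradient favg xt) - gradient favg x
        = (1 / ((m+1:ℕ):ℝ)) • ∑ i ∈ I, cc i := by
      rw [h2, smul_sub, smul_smul, one_div, inv_mul_cancel₀ (ne_of_gt hb1R), one_smul]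
      have he : ∑ i ∈ I, (gradient (f i) x - gradient (f i) xt) = ∑ i ∈ I, a i := rfl
      rw [he, ← habar2]
      abel
    rw [h3, norm_smul, mul_pow, Real.norm_eq_abs, sq_abs, one_div]
  have hcardP : (((Finset.powersetCard (m+1) (Finset.univ : Finset (Fin n))).card) : ℝ)
      = (n.choose (m+1) : ℝ) := by
    rw [Finset.card_powersetCard, Finset.card_univ, Fintype.card_fin]
  have hvar := aux_varsum hn2 m cc hc
  have hch := aux_choose n m hn2 hbn
  have hC0 : (0:ℝ) < (n.choose (m+1) : ℝ) := by exact_mod_cast Nat.choose_pos hbn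
  have hLHS : (((Finset.powersetCard (m+1) (Finset.univ : Finset (Fin n))).card : ℝ))⁻¹ *
        ∑ I ∈ Finset.powersetCard (m+1) (Finset.univ : Finset (Fin n)),
          ‖((1 / ((m+1:ℕ) : ℝ)) • ∑ i ∈ I, (gradient (f i) x - gradient (f i) xt)
              + gradient favg xt) - gradient favg x‖ ^ 2
      = ((n:ℝ) - ((m+1:ℕ):ℝ)) / ((n:ℝ) * ((n:ℝ) - 1) * ((m+1:ℕ):ℝ))
          * ∑ i, ‖cc i‖ ^ 2 := by
    rw [Finset.sum_congr rfl hterm, ← Finset.mul_sum, hvar, hcardP]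
    have hbne : ((m+1:ℕ):ℝ) ≠ 0 := ne_of_gt hb1R
    have key : ((((n - 1).choose m : ℕ)) : ℝ)
          - (if m = 0 then (0:ℝ) else (((n - 2).choose (m - 1) : ℕ) : ℝ))
        = ((n.choose (m + 1) : ℕ) : ℝ) * ((m:ℝ) + 1) * ((n:ℝ) - ((m:ℝ) + 1))
            / ((n:ℝ) * ((n:ℝ) - 1)) := by
      rw [eq_div_iff (mul_ne_zero (ne_of_gt hnR) (ne_of_gt hn1R))]
      exact hch
    rw [key]
    push_cast
    field_simp
  -- inequality chain
  have hTa : (∑ i, ‖cc i‖ ^ 2) ≤ ∑ i, ‖a i‖ ^ 2 := by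
    have h5 : ∀ i : Fin n, ‖cc i‖ ^ 2
        = ‖a i‖ ^ 2 - 2 * @inner ℝ _ _ (a i) abar + ‖abar‖ ^ 2 := by
      intro i
      simp only [hcc]
      exact norm_sub_sq_real (a i) abar
    have h6 : ∑ i, ‖cc i‖ ^ 2
        = (∑ i, ‖a i‖ ^ 2) - 2 * @inner ℝ _ _ (∑ i, a i) abar + (n:ℝ) * ‖abar‖ ^ 2 := by
      rw [Finset.sum_congr rfl fun i _ => h5 i, Finset.sum_add_distrib,
        Finset.sum_sub_distrib, Finset.sum_const, Finset.card_univ, Fintype.card_fin,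
        ← Finset.mul_sum, ← sum_inner, nsmul_eq_mul]
    have h7 : @inner ℝ _ _ (∑ i, a i) abar = (n:ℝ) * ‖abar‖ ^ 2 := by
      rw [hsum_a, real_inner_smul_left, real_inner_self_eq_norm_sq]
    rw [h6, h7]
    have h8 : 0 ≤ (n:ℝ) * ‖abar‖ ^ 2 := by positivity
    linarith
  have hfinal : ∑ i, ‖a i‖ ^ 2
      ≤ 4 * L * (n:ℝ) * ((favg x - favg xstar) + (favg xt - favg xstar)) := by
    have h6 : ∀ i : Fin n, ‖a i‖ ^ 2
        ≤ 2 * ‖gradient (f i) x - gradient (f i) xstar‖ ^ 2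
          + 2 * ‖gradient (f i) xt - gradient (f i) xstar‖ ^ 2 := by
      intro i
      have he : a i = (gradient (f i) x - gradient (f i) xstar)
          - (gradient (f i) xt - gradient (f i) xstar) := by
        simp only [ha]
        abel
      rw [he]
      exact aux_two _ _
    calc ∑ i, ‖a i‖ ^ 2
        ≤ ∑ i, (2 * ‖gradient (f i) x - gradient (f i) xstar‖ ^ 2
            + 2 * ‖gradient (f i) xt - gradient (f i) xstar‖ ^ 2) :=
          Finset.sum_le_sum fun i _ => h6 i
      _ = 2 * (∑ i, ‖gradient (f i) x - gradient (f i) xstar‖ ^ 2)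
            + 2 * (∑ i, ‖gradient (f i) xt - gradient (f i) xstar‖ ^ 2) := by
          rw [Finset.sum_add_distrib, ← Finset.mul_sum, ← Finset.mul_sum]
      _ ≤ 2 * (2 * L * (n:ℝ) * (favg x - favg xstar))
            + 2 * (2 * L * (n:ℝ) * (favg xt - favg xstar)) := by
          have hx1 := hco x
          have hx2 := hco xt
          have two0 : (0:ℝ) ≤ 2 := by norm_num
          exact add_le_add (mul_le_mul_of_nonneg_left hx1 two0)
            (mul_le_mul_of_nonneg_left hx2 two0)
      _ = 4 * L * (n:ℝ) * ((favg x - favg xstar) + (favg xt - favg xstar)) := by ring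
  have hκ : 0 ≤ ((n:ℝ) - ((m+1:ℕ):ℝ)) / ((n:ℝ) * ((n:ℝ) - 1) * ((m+1:ℕ):ℝ)) := by
    apply div_nonneg
    · have : ((m+1:ℕ):ℝ) ≤ (n:ℝ) := by exact_mod_cast hbn
      linarith
    · positivity
  rw [hLHS]
  calc ((n:ℝ) - ((m+1:ℕ):ℝ)) / ((n:ℝ) * ((n:ℝ) - 1) * ((m+1:ℕ):ℝ)) * ∑ i, ‖cc i‖ ^ 2
      ≤ ((n:ℝ) - ((m+1:ℕ):ℝ)) / ((n:ℝ) * ((n:ℝ) - 1) * ((m+1:ℕ):ℝ))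
          * (4 * L * (n:ℝ) * ((favg x - favg xstar) + (favg xt - favg xstar))) :=
        mul_le_mul_of_nonneg_left (le_trans hTa hfinal) hκ
    _ = 4 * L * (((n : ℝ) - ((m+1:ℕ):ℝ)) / (((n : ℝ) - 1) * ((m+1:ℕ):ℝ)))
          * ((favg x - favg xstar) + (favg xt - favg xstar)) := by
        field_simp
end
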